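/- Let k ≥ 2 and let x ∈ [0,1)^{d+1} be an element of a finite subgroup of (ℝ/ℤ)^{d+1} whose order is 6, with ht(x) = 2k and ht(jx) = k for j = 2, 3, 4, 5. For j = 1,…,5 let q_j = #{ i : x_i = j/6 }. Then q_1 = q_2 = 0 and q_3 = q_4 = q_5 = k. -/
import Mathlib


noncomputable section

/-- Fractional-part addition on `[0,1)`-vectors, modelling the group `(ℝ/ℤ)^n`. -/
def fadd {n : ℕ} (x y : Fin n → ℝ) : Fin n → ℝ := fun i => Int.fract (x i + y i)

/-- Inverse in `(ℝ/ℤ)^n` on `[0,1)`-representatives. -/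
def fneg {n : ℕ} (x : Fin n → ℝ) : Fin n → ℝ := fun i => Int.fract (-(x i))

/-- `j`-fold sum in `(ℝ/ℤ)^n` on `[0,1)`-representatives. -/
def fsmul {n : ℕ} (j : ℤ) (x : Fin n → ℝ) : Fin n → ℝ := fun i => Int.fract ((j : ℝ) * x i)

/-- The height `ht x = ∑ i, x i` of a `[0,1)`-vector. -/
def ht {n : ℕ} (x : Fin n → ℝ) : ℝ := ∑ i, x i

/-- The support `supp x = {i : x i ≠ 0}`. -/
def supp {n : ℕ} (x : Fin n → ℝ) : Set (Fin n) := {i | x i ≠ 0}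

/-- `S ⊆ [0,1)^n` is a subgroup of `(ℝ/ℤ)^n` (in `[0,1)`-coordinates). -/
def IsSubgroupSet {n : ℕ} (S : Set (Fin n → ℝ)) : Prop :=
  (∀ x ∈ S, ∀ i, x i ∈ Set.Ico (0 : ℝ) 1) ∧ 0 ∈ S ∧
    (∀ x ∈ S, ∀ y ∈ S, fadd x y ∈ S) ∧ ∀ x ∈ S, fneg x ∈ S

/-- The subgroup of `(ℝ/ℤ)^n` generated by a set of `[0,1)`-vectors. -/
def genSet {n : ℕ} (gs : Set (Fin n → ℝ)) : Set (Fin n → ℝ) :=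
  ⋂₀ {S | IsSubgroupSet S ∧ gs ⊆ S}


set_option maxHeartbeats 1000000 in
theorem stmt6 (d k : ℕ) (hk : 2 ≤ k) (S : Set (Fin (d+1) → ℝ)) (hS : IsSubgroupSet S)
    (hfin : S.Finite) (x : Fin (d+1) → ℝ) (hx : x ∈ S)
    (hord6 : fsmul 6 x = 0) (hmin : ∀ j : ℕ, 0 < j → j < 6 → fsmul j x ≠ 0)
    (h1 : ht x = 2 * k) (h2 : ht (fsmul 2 x) = k) (h3 : ht (fsmul 3 x) = k)
    (h4 : ht (fsmul 4 x) = k) (h5 : ht (fsmul 5 x) = k) :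
    {i | x i = 1/6}.ncard = 0 ∧ {i | x i = 1/3}.ncard = 0 ∧
      {i | x i = 1/2}.ncard = k ∧ {i | x i = 2/3}.ncard = k ∧ {i | x i = 5/6}.ncard = k := by
  classical
  have hrange := hS.1 x hx
  have hmem : ∀ i, x i = 0 ∨ x i = 1/6 ∨ x i = 1/3 ∨ x i = 1/2 ∨ x i = 2/3 ∨ x i = 5/6 := by
    intro i
    have h0 : (0:ℝ) ≤ x i := (hrange i).1
    have h1' : x i < 1 := (hrange i).2
    have h6 : Int.fract ((6:ℝ) * x i) = 0 := by
      have := congrFun hord6 i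
      simpa [fsmul] using this
    obtain ⟨n, hn0, hn6, hn⟩ : ∃ n : ℤ, 0 ≤ n ∧ n < 6 ∧ (6:ℝ) * x i = n := by
      refine ⟨⌊(6:ℝ) * x i⌋, ?_, ?_, ?_⟩
      · have : (0:ℝ) ≤ (6:ℝ) * x i := by linarith
        exact_mod_cast Int.le_floor.mpr (by exact_mod_cast this)
      · have : (6:ℝ) * x i < 6 := by linarith
        exact_mod_cast Int.floor_lt.mpr (by exact_mod_cast this)
      · have := Int.fract_add_floor ((6:ℝ) * x i)
        rw [h6] at this; linarith
    interval_cases n <;> push_cast at hn <;>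
      first
      | exact Or.inl (by linarith)
      | exact Or.inr (Or.inl (by linarith))
      | exact Or.inr (Or.inr (Or.inl (by linarith)))
      | exact Or.inr (Or.inr (Or.inr (Or.inl (by linarith))))
      | exact Or.inr (Or.inr (Or.inr (Or.inr (Or.inl (by linarith)))))
      | exact Or.inr (Or.inr (Or.inr (Or.inr (Or.inr (by linarith)))))
  set V : Finset ℝ := {0, 1/6, 1/3, 1/2, 2/3, 5/6} with hV
  have hmap : ∀ i ∈ Finset.univ, x i ∈ V := by
    intro i _; rcases hmem i with h|h|h|h|h|h <;> simp [hV, h]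
  have main : ∀ v : ℝ → ℝ, ∑ i, v (x i) =
      ∑ y ∈ V, ((Finset.univ.filter (fun i => x i = y)).card : ℝ) * v y := by
    intro v
    rw [← Finset.sum_fiberwise_of_maps_to hmap (fun i => v (x i))]
    refine Finset.sum_congr rfl fun y _ => ?_
    have hc : ∑ i ∈ Finset.univ.filter (fun i => x i = y), v (x i)
        = ∑ _i ∈ Finset.univ.filter (fun i => x i = y), v y :=
      Finset.sum_congr rfl fun i hi => by rw [(Finset.mem_filter.mp hi).2]
    rw [hc, Finset.sum_const, nsmul_eq_mul]
  set q1 : ℕ := (Finset.univ.filter (fun i => x i = (1:ℝ)/6)).card with hq1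
  set q2 : ℕ := (Finset.univ.filter (fun i => x i = (1:ℝ)/3)).card with hq2
  set q3 : ℕ := (Finset.univ.filter (fun i => x i = (1:ℝ)/2)).card with hq3
  set q4 : ℕ := (Finset.univ.filter (fun i => x i = (2:ℝ)/3)).card with hq4
  set q5 : ℕ := (Finset.univ.filter (fun i => x i = (5:ℝ)/6)).card with hq5
  have expand : ∀ v : ℝ → ℝ, ∑ i, v (x i) =
      ((Finset.univ.filter (fun i => x i = (0:ℝ))).card : ℝ) * v 0 +
      (q1 * v (1/6) + (q2 * v (1/3) + (q3 * v (1/2) + (q4 * v (2/3) + q5 * v (5/6))))) := by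
    intro v
    rw [main v, hV]
    rw [Finset.sum_insert (by norm_num), Finset.sum_insert (by norm_num),
        Finset.sum_insert (by norm_num), Finset.sum_insert (by norm_num),
        Finset.sum_insert (by norm_num), Finset.sum_singleton]
  have E1 : (q1:ℝ) * (1/6) + q2 * (1/3) + q3 * (1/2) + q4 * (2/3) + q5 * (5/6) = 2*k := by
    have h1' : ∑ i, id (x i) = 2*(k:ℝ) := by simpa [ht] using h1
    rw [expand id] at h1'
    simp only [id] at h1'; linarith
  have E2 : (q1:ℝ) * (1/3) + q2 * (2/3) + q4 * (1/3) + q5 * (2/3) = k := by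
    have h' : ∑ i, Int.fract ((2:ℝ) * x i) = (k:ℝ) := by simpa [ht, fsmul] using h2
    rw [expand (fun t => Int.fract ((2:ℝ) * t))] at h'
    norm_num [Int.fract] at h'; linarith
  have E3 : (q1:ℝ) * (1/2) + q3 * (1/2) + q5 * (1/2) = k := by
    have h' : ∑ i, Int.fract ((3:ℝ) * x i) = (k:ℝ) := by simpa [ht, fsmul] using h3
    rw [expand (fun t => Int.fract ((3:ℝ) * t))] at h'
    norm_num [Int.fract] at h'; linarith
  have E4 : (q1:ℝ) * (2/3) + q2 * (1/3) + q4 * (2/3) + q5 * (1/3) = k := by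
    have h' : ∑ i, Int.fract ((4:ℝ) * x i) = (k:ℝ) := by simpa [ht, fsmul] using h4
    rw [expand (fun t => Int.fract ((4:ℝ) * t))] at h'
    norm_num [Int.fract] at h'; linarith
  have E5 : (q1:ℝ) * (5/6) + q2 * (2/3) + q3 * (1/2) + q4 * (1/3) + q5 * (1/6) = k := by
    have h' : ∑ i, Int.fract ((5:ℝ) * x i) = (k:ℝ) := by simpa [ht, fsmul] using h5
    rw [expand (fun t => Int.fract ((5:ℝ) * t))] at h'
    norm_num [Int.fract] at h'; linarith
  have g1 : (q1:ℝ) = 0 := by linarith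
  have g2 : (q2:ℝ) = 0 := by linarith
  have g3 : (q3:ℝ) = k := by linarith
  have g4 : (q4:ℝ) = k := by linarith
  have g5 : (q5:ℝ) = k := by linarith
  have conv : ∀ c : ℝ, {i | x i = c}.ncard = (Finset.univ.filter (fun i => x i = c)).card := by
    intro c
    rw [← Set.ncard_coe_finset]
    congr 1; ext i; simp
  refine ⟨?_, ?_, ?_, ?_, ?_⟩ <;> rw [conv]
  · exact_mod_cast g1
  · exact_mod_cast g2
  · exact_mod_cast g3
  · exact_mod_cast g4
  · exact_mod_cast g5
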